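/- If I is an acyclic set of the interaction graph G(f) of a coding function f, then the interaction graph of the reduced coding function f^{-I} is a subgraph of the graph reduction G(f)^{-I}. -/

import Mathlib

/-- Arc `(u,i)` of the interaction graph of a coding function `f`. -/
def arcCF {V A : Type*} [DecidableEq V] (f : (V → A) → V → A) (u i : V) : Prop :=
  ∃ (x : V → A) (a : A), f (Function.update x u a) i ≠ f x i

/-- The `v`-reduction of a coding function. -/
def reduceCF {V A : Type*} [DecidableEq V] (f : (V → A) → V → A) (v : V) :
    (V → A) → V → A :=
  fun x i => if i = v then x i else f (Function.update x v (f x v)) i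

/-- Path from `u` to `w` with all internal vertices in `I` (at least one). -/
def PathThrough {V : Type*} (G : V → V → Prop) (I : Set V) (u w : V) : Prop :=
  ∃ l : List V, l ≠ [] ∧ l.Nodup ∧ (∀ i ∈ l, i ∈ I) ∧ List.Chain G u (l ++ [w])

/-- The simultaneous `I`-reduction of a digraph. -/
def gReduceSet {V : Type*} (G : V → V → Prop) (I : Set V) : V → V → Prop :=
  fun a b => a ∉ I ∧ b ∉ I ∧ (G a b ∨ PathThrough G I a b)

/-- `I` is an acyclic set of `G`. -/
def AcyclicIn {V : Type*} (G : V → V → Prop) (I : Set V) : Prop :=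
  ∀ a ∈ I, ¬ ∃ l : List V, (∀ i ∈ l, i ∈ I) ∧ List.Chain G a (l ++ [a])

/-- Single-step lemma: an arc `(u,i)` of `reduceCF f v` with `u ≠ v` comes from either a
direct arc of `f`, or a two-step path through `v`. -/
lemma arc_reduce {V A : Type*} [DecidableEq V] (f : (V → A) → V → A) (v u i : V)
    (huv : u ≠ v) (h : arcCF (reduceCF f v) u i) :
    arcCF f u i ∨ (arcCF f u v ∧ arcCF f v i) := by
  obtain ⟨x, a, hx⟩ := h
  by_cases hiv : i = v
  · subst hiv
    exfalso
    apply hx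
    simp [reduceCF, Function.update_of_ne (Ne.symm huv)]
  · simp only [reduceCF, if_neg hiv] at hx
    by_cases hb : f (Function.update x u a) v = f x v
    · left
      refine ⟨Function.update x v (f x v), a, ?_⟩
      rw [Function.update_comm (Ne.symm huv)]
      rw [hb] at hx
      exact hx
    · by_cases h2 : f (Function.update (Function.update x v (f (Function.update x u a) v)) u a) i
          = f (Function.update x v (f (Function.update x u a) v)) i
      · right
        refine ⟨⟨x, a, hb⟩, Function.update x v (f x v), f (Function.update x u a) v, ?_⟩
        rw [Function.update_idem]
        intro hcon
        apply hx
        rw [Function.update_comm huv, h2, hcon]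
      · left
        exact ⟨Function.update x v (f (Function.update x u a) v), a, h2⟩

/-- Lifting a chain of `reduceCF f v` with internal vertices in `t` (where `v ∉ t`) to a
chain of `f` with internal vertices in `v :: t`. -/
lemma lift_chain {V A : Type*} [DecidableEq V] (f : (V → A) → V → A) (v i : V) (t : List V)
    (hvt : v ∉ t) (hiv : i ≠ v) :
    ∀ (m : List V) (u : V), u ≠ v → (∀ j ∈ m, j ∈ t) →
      List.Chain (arcCF (reduceCF f v)) u (m ++ [i]) →
      ∃ m', (∀ j ∈ m', j ∈ v :: t) ∧ List.Chain (arcCF f) u (m' ++ [i]) := by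
  intro m
  induction m with
  | nil =>
    intro u huv _ hch
    simp only [List.Chain, List.nil_append, List.chain_cons, List.IsChain.singleton, and_true] at hch
    rcases arc_reduce f v u i huv hch with h | ⟨h1, h2⟩
    · exact ⟨[], by simp, by simp [List.Chain, h]⟩
    · exact ⟨[v], by simp, by simp [List.Chain, h1, h2]⟩
  | cons b m ih =>
    intro u huv hmem hch
    simp only [List.Chain, List.cons_append, List.chain_cons] at hch
    obtain ⟨hub, hch⟩ := hch
    have hbt : b ∈ t := hmem b (by simp)
    have hbv : b ≠ v := fun h => hvt (h ▸ hbt)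
    obtain ⟨m', hm2, hch'⟩ := ih b hbv (fun j hj => hmem j (by simp [hj])) hch
    rcases arc_reduce f v u b huv hub with h | ⟨h1, h2⟩
    · refine ⟨b :: m', ?_, ?_⟩
      · intro j hj
        rw [List.mem_cons] at hj
        rcases hj with hj | hj
        · simp [hj, hbt]
        · exact hm2 j hj
      · simpa using List.Chain.cons h hch'
    · refine ⟨v :: b :: m', ?_, ?_⟩
      · intro j hj
        rw [List.mem_cons, List.mem_cons] at hj
        rcases hj with hj | hj | hj
        · simp [hj]
        · simp [hj, hbt]
        · exact hm2 j hj
      · simp only [List.Chain, List.cons_append, List.chain_cons]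
        exact ⟨h1, h2, by simpa [List.Chain] using hch'⟩

/-- Main induction: an arc of the full reduction along `s` gives a walk of `f` with
internal vertices in `s`. -/
lemma aux_fold {V A : Type*} [DecidableEq V] :
    ∀ (s : List V) (f : (V → A) → V → A), s.Nodup →
      ∀ u i : V, u ∉ s → i ∉ s → arcCF (List.foldl reduceCF f s) u i →
      ∃ m : List V, (∀ j ∈ m, j ∈ s) ∧ List.Chain (arcCF f) u (m ++ [i]) := by
  intro s
  induction s with
  | nil =>
    intro f _ u i _ _ h
    exact ⟨[], by simp, by simpa [List.Chain] using h⟩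
  | cons v t ih =>
    intro f hnd u i hu hi h
    simp only [List.foldl_cons] at h
    have hndt : t.Nodup := (List.nodup_cons.mp hnd).2
    have hvt : v ∉ t := (List.nodup_cons.mp hnd).1
    have hut : u ∉ t := fun hh => hu (by simp [hh])
    have hit : i ∉ t := fun hh => hi (by simp [hh])
    have huv : u ≠ v := fun hh => hu (by simp [hh])
    have hiv : i ≠ v := fun hh => hi (by simp [hh])
    obtain ⟨m, hm, hch⟩ := ih (reduceCF f v) hndt u i hut hit h
    obtain ⟨m', hm', hch'⟩ := lift_chain f v i t hvt hiv m u huv hm hch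
    exact ⟨m', hm', hch'⟩

/-- Extracting a duplicate from a non-Nodup list. -/
lemma exists_dup {V : Type*} :
    ∀ (l : List V), ¬ l.Nodup → ∃ (a : V) (l1 l2 l3 : List V),
      l = l1 ++ a :: (l2 ++ a :: l3) := by
  intro l
  induction l with
  | nil => intro h; exact absurd List.nodup_nil h
  | cons b t ih =>
    intro h
    by_cases hbt : b ∈ t
    · obtain ⟨s, r, hsr⟩ := List.append_of_mem hbt
      exact ⟨b, [], s, r, by simp [hsr]⟩
    · have : ¬ t.Nodup := fun hn => h (List.nodup_cons.mpr ⟨hbt, hn⟩)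
      obtain ⟨a, l1, l2, l3, hl⟩ := ih this
      exact ⟨a, b :: l1, l2, l3, by simp [hl]⟩

/-- De-duplication: any walk with internal vertices in `I` yields an arc or a `PathThrough`. -/
lemma dedup_walk {V : Type*} (G : V → V → Prop) (I : Set V) (u w : V) :
    ∀ (n : ℕ) (l : List V), l.length ≤ n → (∀ j ∈ l, j ∈ I) →
      List.Chain G u (l ++ [w]) → G u w ∨ PathThrough G I u w := by
  intro n
  induction n with
  | zero =>
    intro l hlen hmem hch
    have : l = [] := List.eq_nil_of_length_eq_zero (Nat.le_zero.mp hlen)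
    subst this
    left
    simpa [List.Chain] using hch
  | succ n ih =>
    intro l hlen hmem hch
    by_cases hnd : l.Nodup
    · cases l with
      | nil => left; simpa [List.Chain] using hch
      | cons b t =>
        right
        exact ⟨b :: t, by simp, hnd, hmem, hch⟩
    · obtain ⟨a, l1, l2, l3, hl⟩ := exists_dup l hnd
      subst hl
      -- split the chain around the two occurrences of a
      have h1 : List.Chain G u (l1 ++ a :: ((l2 ++ a :: l3) ++ [w])) := by
        simpa using hch
      rw [List.Chain, List.isChain_cons_split] at h1
      obtain ⟨ha1, ha2⟩ := h1
      have h2 : List.Chain G a (l2 ++ a :: (l3 ++ [w])) := by simpa [List.Chain] using ha2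
      rw [List.Chain, List.isChain_cons_split] at h2
      obtain ⟨_, ha3⟩ := h2
      have hch' : List.Chain G u ((l1 ++ a :: l3) ++ [w]) := by
        have := (List.isChain_cons_split (l₁ := l1) (l₂ := l3 ++ [w]) (a := u) (c := a)).mpr ⟨ha1, ha3⟩
        simpa [List.Chain] using this
      apply ih (l1 ++ a :: l3)
      · have : (l1 ++ a :: l3).length + 1 ≤ (l1 ++ a :: (l2 ++ a :: l3)).length := by
          simp [List.length_append]
        omega
      · intro j hj
        apply hmem
        simp only [List.mem_append, List.mem_cons] at hj ⊢
        tauto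
      · exact hch'

/-- If `I` is an acyclic set of `G(f)`, then the interaction graph of the reduced
coding function `f^{-I}` (obtained by reducing along any enumeration `s` of `I`)
is a subgraph of the graph reduction `G(f)^{-I}`. -/
theorem stmt7 {V A : Type*} [DecidableEq V] (f : (V → A) → V → A) (I : Set V)
    (hI : AcyclicIn (arcCF f) I) (s : List V) (hnd : s.Nodup)
    (hs : ∀ v, v ∈ s ↔ v ∈ I) :
    ∀ u i : V, u ∉ I → i ∉ I →
      arcCF (List.foldl reduceCF f s) u i → gReduceSet (arcCF f) I u i := by
  intro u i hu hi h
  have hus : u ∉ s := fun hh => hu ((hs u).mp hh)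
  have his : i ∉ s := fun hh => hi ((hs i).mp hh)
  obtain ⟨m, hm, hch⟩ := aux_fold s f hnd u i hus his h
  refine ⟨hu, hi, ?_⟩
  exact dedup_walk (arcCF f) I u i m.length m le_rfl (fun j hj => (hs j).mp (hm j hj)) hch
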